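/- Let k be an algebraically closed field of characteristic p > 0. The tensor product of the constant group scheme ℤ/pℤ with μ_p in the category of affine abelian group schemes over k is isomorphic to μ_p. -/

import Mathlib

/-- An affine abelian group scheme over `k`, presented via its functor of points. -/
structure AffAbGrp (k : Type) [CommRing k] : Type 1 where
  C : Type
  [commRing : CommRing C]
  [algebra : Algebra k C]
  add : ∀ (R : Type) [CommRing R] [Algebra k R],
    (C →ₐ[k] R) → (C →ₐ[k] R) → (C →ₐ[k] R)
  zero : ∀ (R : Type) [CommRing R] [Algebra k R], (C →ₐ[k] R)
  neg : ∀ (R : Type) [CommRing R] [Algebra k R], (C →ₐ[k] R) → (C →ₐ[k] R)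
  add_assoc : ∀ (R : Type) [CommRing R] [Algebra k R] (f g h : C →ₐ[k] R),
    add R (add R f g) h = add R f (add R g h)
  add_comm : ∀ (R : Type) [CommRing R] [Algebra k R] (f g : C →ₐ[k] R),
    add R f g = add R g f
  zero_add : ∀ (R : Type) [CommRing R] [Algebra k R] (f : C →ₐ[k] R),
    add R (zero R) f = f
  neg_add : ∀ (R : Type) [CommRing R] [Algebra k R] (f : C →ₐ[k] R),
    add R (neg R f) f = zero R
  map_add : ∀ (R S : Type) [CommRing R] [Algebra k R] [CommRing S] [Algebra k S]
    (ψ : R →ₐ[k] S) (f g : C →ₐ[k] R),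
    ψ.comp (add R f g) = add S (ψ.comp f) (ψ.comp g)
  map_zero : ∀ (R S : Type) [CommRing R] [Algebra k R] [CommRing S] [Algebra k S]
    (ψ : R →ₐ[k] S), ψ.comp (zero R) = zero S

attribute [instance] AffAbGrp.commRing AffAbGrp.algebra

variable {k : Type} [CommRing k]

/-- A homomorphism of affine abelian group schemes. -/
structure AffAbHom (G H : AffAbGrp k) where
  app : ∀ (R : Type) [CommRing R] [Algebra k R], (G.C →ₐ[k] R) → (H.C →ₐ[k] R)
  app_add : ∀ (R : Type) [CommRing R] [Algebra k R] (f g : G.C →ₐ[k] R),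
    app R (G.add R f g) = H.add R (app R f) (app R g)
  app_nat : ∀ (R S : Type) [CommRing R] [Algebra k R] [CommRing S] [Algebra k S]
    (ψ : R →ₐ[k] S) (f : G.C →ₐ[k] R), ψ.comp (app R f) = app S (ψ.comp f)

/-- The group functor `μ_p`: over `R` the subgroup `{x ∈ Rˣ : x^p = 1}`. -/
def mu (p : ℕ) (R : Type) [CommRing R] : Subgroup Rˣ :=
  MonoidHom.ker (powMonoidHom p : Rˣ →* Rˣ)

/-- Functoriality of `μ_p` in `R`. -/
def muMap (p : ℕ) {R S : Type} [CommRing R] [CommRing S] (ψ : R →+* S) (x : mu p R) :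
    mu p S :=
  ⟨Units.map ψ.toMonoidHom (x : Rˣ), by
    have hx : (x : Rˣ) ^ p = 1 := x.2
    simp only [mu, MonoidHom.mem_ker, powMonoidHom_apply, ← map_pow, hx, map_one]⟩

/-- A bilinear natural transformation `ℤ/pℤ × μ_p → H`, where the constant group scheme
`ℤ/pℤ` over a field of characteristic `p` has functor of points
`R ↦ {r ∈ R : r^p = r}` (with addition as group law). -/
structure ConstMuBilin (p : ℕ) (k : Type) [CommRing k] (H : AffAbGrp k) where
  b : ∀ (R : Type) [CommRing R] [Algebra k R] (r : R), r ^ p = r → mu p R → (H.C →ₐ[k] R)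
  left : ∀ (R : Type) [CommRing R] [Algebra k R] (r s : R) (hr : r ^ p = r)
    (hs : s ^ p = s) (hrs : (r + s) ^ p = r + s) (x : mu p R),
    b R (r + s) hrs x = H.add R (b R r hr x) (b R s hs x)
  right : ∀ (R : Type) [CommRing R] [Algebra k R] (r : R) (hr : r ^ p = r) (x y : mu p R),
    b R r hr (x * y) = H.add R (b R r hr x) (b R r hr y)
  nat : ∀ (R S : Type) [CommRing R] [Algebra k R] [CommRing S] [Algebra k S]
    (ψ : R →ₐ[k] S) (r : R) (hr : r ^ p = r) (hr' : (ψ r) ^ p = ψ r) (x : mu p R),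
    ψ.comp (b R r hr x) = b S (ψ r) hr' (muMap p ψ.toRingHom x)


set_option linter.unusedSectionVars false
noncomputable section





namespace CT

variable (p : ℕ) [Fact p.Prime]

instance : NeZero p := ⟨(Fact.out : p.Prime).ne_zero⟩

lemma ppos : 0 < p := (Fact.out : p.Prime).pos

lemma pow_eq_pow_of_mod_eq {M : Type*} [Monoid M] {u : M} (hu : u ^ p = 1) {m n : ℕ}
    (h : m % p = n % p) : u ^ m = u ^ n := by
  conv_lhs => rw [← Nat.div_add_mod m p]
  conv_rhs => rw [← Nat.div_add_mod n p]
  rw [pow_add, pow_add, pow_mul, pow_mul, hu, one_pow, h]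
  simp

variable {R S : Type} [CommRing R] [CommRing S]

lemma mu_spec (x : mu p R) : (x : Rˣ) ^ p = 1 := x.2

lemma mu_spec' (x : mu p R) : ((x : Rˣ) : R) ^ p = 1 := by
  have := mu_spec p x
  rw [← Units.val_pow_eq_pow_val, this, Units.val_one]

lemma mem_mu_iff (u : Rˣ) : u ∈ mu p R ↔ u ^ p = 1 := Iff.rfl

lemma muMap_mul (ψ : R →+* S) (x y : mu p R) :
    muMap p ψ (x * y) = muMap p ψ x * muMap p ψ y := by
  apply Subtype.ext; apply Units.ext
  simp [muMap]

lemma muMap_one (ψ : R →+* S) : muMap p ψ (1 : mu p R) = 1 := by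
  apply Subtype.ext; apply Units.ext
  simp [muMap]

lemma muMap_inv (ψ : R →+* S) (x : mu p R) : muMap p ψ x⁻¹ = (muMap p ψ x)⁻¹ := by
  apply Subtype.ext; apply Units.ext
  simp [muMap]

lemma muMap_pow (ψ : R →+* S) (x : mu p R) (n : ℕ) :
    muMap p ψ (x ^ n) = (muMap p ψ x) ^ n := by
  apply Subtype.ext; apply Units.ext
  simp [muMap, SubgroupClass.coe_pow]

lemma mu_coe_pow (x : mu p R) (n : ℕ) : (((x ^ n : mu p R) : Rˣ) : R) = ((x : Rˣ) : R) ^ n := by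
  simp [SubgroupClass.coe_pow]

end CT

namespace CT
variable (p : ℕ) [Fact p.Prime] {K : Type} [CommRing K]
variable {R S : Type} [CommRing R] [Algebra K R] [CommRing S] [Algebra K S]

/-- the coordinate ring of `μ_p`. -/
abbrev MA (K : Type) [CommRing K] (p : ℕ) : Type := MonoidAlgebra K (Multiplicative (ZMod p))

def Xgen (K : Type) [CommRing K] (p : ℕ) : MA K p :=
  MonoidAlgebra.of K (Multiplicative (ZMod p)) (Multiplicative.ofAdd 1)

lemma Xgen_pow (n : ℕ) :
    Xgen K p ^ n = MonoidAlgebra.of K (Multiplicative (ZMod p)) (Multiplicative.ofAdd (n : ZMod p)) := by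
  rw [Xgen, ← map_pow]
  congr 1
  rw [← ofAdd_nsmul]
  congr 1
  simp [nsmul_eq_mul]

lemma Xgen_pow_p : Xgen K p ^ p = 1 := by
  rw [Xgen_pow]
  simp only [ZMod.natCast_self, ofAdd_zero, map_one]

def toMu (f : MA K p →ₐ[K] R) : mu p R :=
  ⟨{ val := f (Xgen K p)
     inv := f (Xgen K p ^ (p - 1))
     val_inv := by
       rw [← map_mul, ← pow_succ', Nat.sub_add_cancel (ppos p), Xgen_pow_p, map_one]
     inv_val := by
       rw [← map_mul, ← pow_succ, Nat.sub_add_cancel (ppos p), Xgen_pow_p, map_one] },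
   by
     rw [mem_mu_iff]
     apply Units.ext
     rw [Units.val_pow_eq_pow_val]
     show f (Xgen K p) ^ p = 1
     rw [← map_pow, Xgen_pow_p, map_one]⟩

lemma toMu_coe (f : MA K p →ₐ[K] R) : ((toMu p f : Rˣ) : R) = f (Xgen K p) := rfl

def chiHom (x : mu p R) : Multiplicative (ZMod p) →* Rˣ where
  toFun g := (x : Rˣ) ^ (Multiplicative.toAdd g).val
  map_one' := by
    show (x : Rˣ) ^ (Multiplicative.toAdd (1 : Multiplicative (ZMod p))).val = 1
    simp
  map_mul' a b := by
    show (x : Rˣ) ^ (Multiplicative.toAdd (a * b)).val = _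
    rw [toAdd_mul, ZMod.val_add]
    rw [← pow_add]
    exact pow_eq_pow_of_mod_eq p (mu_spec p x) (Nat.mod_mod_of_dvd _ dvd_rfl)

def ofMuHom (x : mu p R) : MA K p →ₐ[K] R :=
  MonoidAlgebra.lift K R (Multiplicative (ZMod p)) ((Units.coeHom R).comp (chiHom p x))

lemma ofMuHom_of (x : mu p R) (g : Multiplicative (ZMod p)) :
    ofMuHom p x (MonoidAlgebra.of K (Multiplicative (ZMod p)) g)
      = ((x : Rˣ) : R) ^ (Multiplicative.toAdd g).val := by
  rw [ofMuHom, MonoidAlgebra.lift_of]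
  rfl

lemma ofMuHom_X (x : mu p R) : ofMuHom p x (Xgen K p) = ((x : Rˣ) : R) := by
  rw [Xgen, ofMuHom_of]
  simp [ZMod.val_one_eq_one_mod, Nat.mod_eq_of_lt (Fact.out : p.Prime).one_lt]

def Epoints (R : Type) [CommRing R] [Algebra K R] : (MA K p →ₐ[K] R) ≃ mu p R where
  toFun := toMu p
  invFun := ofMuHom p
  left_inv f := by
    apply MonoidAlgebra.algHom_ext ?_ (Subsingleton.elim _ _)
    intro g
    rw [← MonoidAlgebra.of_apply]
    rw [ofMuHom_of, toMu_coe]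
    have : MonoidAlgebra.of K (Multiplicative (ZMod p)) g
        = Xgen K p ^ (Multiplicative.toAdd g).val := by
      rw [Xgen_pow]
      congr 1
      simp [ZMod.natCast_val, ZMod.cast_id]
    rw [this, map_pow]
  right_inv x := by
    apply Subtype.ext; apply Units.ext
    rw [toMu_coe, ofMuHom_X]

lemma Epoints_natural (ψ : R →ₐ[K] S) (f : MA K p →ₐ[K] R) :
    muMap p ψ.toRingHom (Epoints p R f) = Epoints p S (ψ.comp f) := by
  apply Subtype.ext; apply Units.ext
  show ψ (f (Xgen K p)) = (ψ.comp f) (Xgen K p)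
  rfl

lemma Epoints_symm_natural (ψ : R →ₐ[K] S) (x : mu p R) :
    ψ.comp ((Epoints p R).symm x) = (Epoints p S).symm (muMap p ψ.toRingHom x) := by
  apply (Epoints p S).injective
  rw [Equiv.apply_symm_apply, ← Epoints_natural, Equiv.apply_symm_apply]

end CT



namespace CT
open Polynomial

variable (p : ℕ) [Fact p.Prime]

lemma qpos : 0 < p - 1 := by have := (Fact.out : p.Prime).two_le; omega

open Finset in
lemma sum_pow_poly : (∑ i : ZMod p, (X - C i) ^ (p - 1) : (ZMod p)[X]) = -1 := by
  have h2 := (Fact.out : p.Prime).two_le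
  set S : (ZMod p)[X] := (∑ i : ZMod p, (X - C i) ^ (p - 1)) + 1 with hS
  suffices hz : S = 0 by
    have := hS ▸ hz
    linear_combination this
  -- evaluations
  have heval : ∀ a : ZMod p, S.eval a = 0 := by
    intro a
    rw [hS]
    rw [eval_add, eval_finset_sum, eval_one]
    have hsum : ∑ i : ZMod p, ((X - C i) ^ (p - 1)).eval a = -1 := by
      have hterm : ∀ i : ZMod p, ((X - C i) ^ (p - 1)).eval a = (a - i) ^ (p - 1) := by
        intro i; simp [eval_pow]
      calc ∑ i : ZMod p, ((X - C i) ^ (p - 1)).eval a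
          = ∑ i : ZMod p, (a - i) ^ (p - 1) := by
            exact Finset.sum_congr rfl fun i _ => hterm i
        _ = ∑ i ∈ Finset.univ.erase a, (a - i) ^ (p - 1) + (a - a) ^ (p - 1) := by
            rw [Finset.sum_erase_add]
            exact Finset.mem_univ a
        _ = ∑ i ∈ Finset.univ.erase a, 1 + 0 := by
            congr 1
            · apply Finset.sum_congr rfl
              intro i hi
              have : a - i ≠ 0 := sub_ne_zero.2 (Ne.symm (Finset.ne_of_mem_erase hi))
              exact ZMod.pow_card_sub_one_eq_one this
            · rw [sub_self, zero_pow (Nat.sub_ne_zero_of_lt h2)]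
        _ = ((p - 1 : ℕ) : ZMod p) := by
            rw [Finset.sum_const, Finset.card_erase_of_mem (Finset.mem_univ a)]
            simp [ZMod.card]
        _ = -1 := by
            rw [Nat.cast_sub (by omega), ZMod.natCast_self, Nat.cast_one, zero_sub]
    rw [hsum]; ring
  -- degree bound
  rcases eq_or_ne S 0 with h0 | h0
  · exact h0
  exfalso
  have hdeg : S.degree < ((p - 1 : ℕ) : WithBot ℕ) := by
    have hsplit : S = (∑ i : ZMod p, ((X - C i) ^ (p - 1) - X ^ (p - 1))) + 1 := by
      rw [hS, Finset.sum_sub_distrib, Finset.sum_const]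
      simp [ZMod.card, ZMod.natCast_self, nsmul_eq_mul]
    rw [hsplit]
    have hterm : ∀ i : ZMod p, ((X - C i) ^ (p - 1) - X ^ (p - 1) : (ZMod p)[X]).degree
        < ((p - 1 : ℕ) : WithBot ℕ) := by
      intro i
      have hmonic : ((X - C i) ^ (p - 1) : (ZMod p)[X]).Monic := (monic_X_sub_C i).pow _
      have hd1 : ((X - C i) ^ (p - 1) : (ZMod p)[X]).degree = ((p - 1 : ℕ) : WithBot ℕ) := by
        rw [degree_pow' (by rw [(monic_X_sub_C i).leadingCoeff, one_pow]; exact one_ne_zero),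
          degree_X_sub_C]
        simp
      calc ((X - C i) ^ (p - 1) - X ^ (p - 1) : (ZMod p)[X]).degree
          < ((X - C i) ^ (p - 1) : (ZMod p)[X]).degree := by
            apply degree_sub_lt
            · rw [hd1, degree_X_pow]
            · exact hmonic.ne_zero
            · rw [hmonic.leadingCoeff, (monic_X_pow (p-1)).leadingCoeff]
        _ = _ := hd1
    have hsumdeg : (∑ i : ZMod p, ((X - C i) ^ (p - 1) - X ^ (p - 1)) : (ZMod p)[X]).degree
        < ((p - 1 : ℕ) : WithBot ℕ) := by
      apply lt_of_le_of_lt (degree_sum_le _ _)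
      rw [Finset.sup_lt_iff]
      · exact fun i _ => hterm i
      · exact lt_of_le_of_lt bot_le (hterm 0)
    apply lt_of_le_of_lt (degree_add_le _ _)
    rw [max_lt_iff]
    refine ⟨hsumdeg, ?_⟩
    apply lt_of_le_of_lt degree_one_le
    exact_mod_cast WithBot.coe_lt_coe.2 (qpos p)
  have hnd : S.natDegree < Fintype.card (ZMod p) := by
    rw [ZMod.card]
    have := (natDegree_lt_iff_degree_lt h0).2 hdeg
    omega
  exact h0 (eq_zero_of_natDegree_lt_card_of_eval_eq_zero S Function.injective_id heval hnd)

end CT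

namespace CT
open Polynomial

variable (p : ℕ) [Fact p.Prime] (K : Type) [Field K] [CharP K p]
variable {R : Type} [CommRing R] [Algebra K R]

lemma absorb_pow {e a b : R} (h : e * a = e * b) (n : ℕ) : e * a ^ n = e * b ^ n := by
  induction n with
  | zero => simp
  | succ n ih =>
    calc e * a ^ (n + 1) = (e * a ^ n) * a := by ring
      _ = (e * b ^ n) * a := by rw [ih]
      _ = b ^ n * (e * a) := by ring
      _ = b ^ n * (e * b) := by rw [h]
      _ = e * b ^ (n + 1) := by ring

include K

lemma natCast_eq_of_zmod {a b : ℕ} (h : (a : ZMod p) = (b : ZMod p)) : (a : R) = (b : R) := by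
  have h1 : (a : K) = (b : K) :=
    (CharP.natCast_eq_natCast K p).2 ((ZMod.natCast_eq_natCast_iff a b p).1 h)
  calc (a : R) = algebraMap K R ((a : ℕ) : K) := by rw [map_natCast]
    _ = algebraMap K R ((b : ℕ) : K) := by rw [h1]
    _ = (b : R) := by rw [map_natCast]

lemma pcast_zero : ((p : ℕ) : R) = 0 := by
  have : ((p : ℕ) : R) = ((0 : ℕ) : R) := natCast_eq_of_zmod p K (by simp)
  simpa using this

/-- the `i`-th Lagrange idempotent attached to an element `r` with `r^p = r`. -/
def Eid (i : ZMod p) (r : R) : R := 1 - (r - (i.val : R)) ^ (p - 1)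

lemma val_pow_cast (i : ZMod p) : ((i.val : R)) ^ p = (i.val : R) := by
  rw [← Nat.cast_pow]
  apply natCast_eq_of_zmod p K
  push_cast
  rw [ZMod.pow_card]

lemma key_sub_pow {r : R} (hr : r ^ p = r) (i : ZMod p) :
    (r - (i.val : R)) ^ p = r - (i.val : R) := by
  rcases subsingleton_or_nontrivial R with h | h
  · exact Subsingleton.elim _ _
  · haveI : CharP R p := charP_of_injective_algebraMap (algebraMap K R).injective p
    rw [sub_pow_char, hr, val_pow_cast p K]

lemma Eid_mul_sub {r : R} (hr : r ^ p = r) (i : ZMod p) :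
    Eid p i r * (r - (i.val : R)) = 0 := by
  have h1 : (r - (i.val : R)) ^ (p - 1) * (r - (i.val : R)) = r - (i.val : R) := by
    rw [← pow_succ, Nat.sub_add_cancel (ppos p), key_sub_pow p K hr]
  calc Eid p i r * (r - (i.val : R))
      = (r - (i.val : R)) - (r - (i.val : R)) ^ (p - 1) * (r - (i.val : R)) := by
        rw [Eid]; ring
    _ = 0 := by rw [h1, sub_self]

lemma Eid_mul_r {r : R} (hr : r ^ p = r) (i : ZMod p) :
    Eid p i r * r = Eid p i r * (i.val : R) := by
  have := Eid_mul_sub p K hr i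
  have h2 : Eid p i r * r - Eid p i r * (i.val : R) = 0 := by
    rw [← mul_sub]; exact this
  linear_combination h2

/-- Fermat for scalars: distinct `i j` give invertible difference with `(p-1)`-th power one. -/
lemma scalar_fermat {i j : ZMod p} (h : i ≠ j) :
    ((i.val : R) - (j.val : R)) ^ (p - 1) = 1 := by
  set d : ZMod p := i - j with hd
  have hd0 : d ≠ 0 := sub_ne_zero.2 h
  have hcast : (i.val : R) - (j.val : R) = (d.val : R) := by
    have : (i.val : R) = (d.val : R) + (j.val : R) := by
      rw [← Nat.cast_add]
      apply natCast_eq_of_zmod p K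
      push_cast [ZMod.natCast_val, ZMod.cast_id]
      rw [hd]; ring
    rw [this]; ring
  rw [hcast, ← Nat.cast_pow]
  have : ((d.val ^ (p - 1) : ℕ) : R) = ((1 : ℕ) : R) := by
    apply natCast_eq_of_zmod p K
    rw [Nat.cast_pow, ZMod.natCast_val, ZMod.cast_id, Nat.cast_one]
    exact ZMod.pow_card_sub_one_eq_one hd0
  simpa using this

lemma Eid_mul_Eid_ne {r : R} (hr : r ^ p = r) {i j : ZMod p} (h : i ≠ j) :
    Eid p i r * Eid p j r = 0 := by
  have habs : Eid p i r * (r - (j.val : R)) = Eid p i r * ((i.val : R) - (j.val : R)) := by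
    rw [mul_sub, mul_sub, Eid_mul_r p K hr]
  have h1 : Eid p i r * (r - (j.val : R)) ^ (p - 1) = Eid p i r := by
    rw [absorb_pow habs, scalar_fermat p K h, mul_one]
  calc Eid p i r * Eid p j r = Eid p i r - Eid p i r * (r - (j.val : R)) ^ (p - 1) := by
        simp only [Eid]; ring
    _ = 0 := by rw [h1, sub_self]

lemma Eid_idem {r : R} (hr : r ^ p = r) (i : ZMod p) :
    Eid p i r * Eid p i r = Eid p i r := by
  have habs : Eid p i r * (r - (i.val : R)) = Eid p i r * 0 := by
    rw [mul_zero]; exact Eid_mul_sub p K hr i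
  have h1 : Eid p i r * (r - (i.val : R)) ^ (p - 1) = 0 := by
    rw [absorb_pow habs, zero_pow (Nat.sub_ne_zero_of_lt (Fact.out : p.Prime).one_lt), mul_zero]
  calc Eid p i r * Eid p i r = Eid p i r - Eid p i r * (r - (i.val : R)) ^ (p - 1) := by
        simp only [Eid]; ring
    _ = Eid p i r := by rw [h1, sub_zero]

lemma sum_pow_R (r : R) : ∑ i : ZMod p, (r - (i.val : R)) ^ (p - 1) = -1 := by
  rcases subsingleton_or_nontrivial R with h | h
  · exact Subsingleton.elim _ _
  haveI : CharP R p := charP_of_injective_algebraMap (algebraMap K R).injective p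
  have := congrArg (Polynomial.eval₂RingHom (ZMod.castHom (dvd_refl p) R) r) (sum_pow_poly p)
  rw [map_sum] at this
  rw [show ((-1 : (ZMod p)[X]) ) = -1 from rfl] at this
  rw [map_neg, map_one] at this
  calc ∑ i : ZMod p, (r - (i.val : R)) ^ (p - 1)
      = ∑ i : ZMod p, (Polynomial.eval₂RingHom (ZMod.castHom (dvd_refl p) R) r)
          ((X - C i) ^ (p - 1)) := by
        apply Finset.sum_congr rfl
        intro i _
        rw [map_pow, map_sub]
        simp [coe_eval₂RingHom, eval₂_X, eval₂_C, ZMod.castHom_apply, ZMod.natCast_val]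
    _ = -1 := this

end CT

namespace CT
open Polynomial

variable (p : ℕ) [Fact p.Prime] (K : Type) [Field K] [CharP K p]
variable {R S : Type} [CommRing R] [Algebra K R] [CommRing S] [Algebra K S]

include K

lemma Eid_sum (r : R) : ∑ i : ZMod p, Eid p i r = 1 := by
  unfold Eid
  rw [Finset.sum_sub_distrib, sum_pow_R p K, Finset.sum_const, Finset.card_univ, ZMod.card,
    nsmul_eq_mul, mul_one, pcast_zero p K]
  ring

lemma eq_zero_of_Eid (r : R) {d : R} (h : ∀ i : ZMod p, Eid p i r * d = 0) : d = 0 := by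
  have h1 : (∑ i : ZMod p, Eid p i r) * d = 0 := by
    rw [Finset.sum_mul]
    exact Finset.sum_eq_zero fun i _ => h i
  rwa [Eid_sum p K, one_mul] at h1

lemma eq_of_Eid (r : R) {c d : R} (h : ∀ i : ZMod p, Eid p i r * c = Eid p i r * d) :
    c = d := by
  have := eq_zero_of_Eid p K r (d := c - d) (fun i => by rw [mul_sub, h i, sub_self])
  linear_combination this

lemma eq_zero_of_Eid2 (r s : R) {d : R}
    (h : ∀ i j : ZMod p, Eid p i r * (Eid p j s * d) = 0) : d = 0 := by
  apply eq_zero_of_Eid p K s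
  intro j
  apply eq_zero_of_Eid p K r
  intro i
  calc Eid p i r * (Eid p j s * d) = 0 := h i j

lemma eq_of_Eid2 (r s : R) {c d : R}
    (h : ∀ i j : ZMod p, Eid p i r * (Eid p j s * c) = Eid p i r * (Eid p j s * d)) :
    c = d := by
  have := eq_zero_of_Eid2 p K r s (d := c - d)
    (fun i j => by rw [mul_sub, mul_sub, h i j, sub_self])
  linear_combination this

/-- the underlying ring element of "x to the power r". -/
def xpowEl (r : R) (u : R) : R := ∑ i : ZMod p, Eid p i r * u ^ i.val

lemma xpowEl_natural (ψ : R →ₐ[K] S) (r u : R) :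
    ψ (xpowEl p r u) = xpowEl p (ψ r) (ψ u) := by
  unfold xpowEl Eid
  rw [map_sum]
  apply Finset.sum_congr rfl
  intro i _
  simp only [map_mul, map_sub, map_pow, map_one, map_natCast]

lemma Eid_mul_xpowEl {r : R} (hr : r ^ p = r) (u : R) (i : ZMod p) :
    Eid p i r * xpowEl p r u = Eid p i r * u ^ i.val := by
  unfold xpowEl
  rw [Finset.mul_sum]
  rw [Finset.sum_eq_single i]
  · rw [← mul_assoc, Eid_idem p K hr]
  · intro j _ hj
    rw [← mul_assoc, Eid_mul_Eid_ne p K hr (Ne.symm hj), zero_mul]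
  · intro hi; exact absurd (Finset.mem_univ i) hi

lemma xpowEl_pow_p {r u : R} (hr : r ^ p = r) (hu : u ^ p = 1) :
    xpowEl p r u ^ p = 1 := by
  apply eq_of_Eid p K r
  intro i
  have h1 : Eid p i r * xpowEl p r u ^ p = Eid p i r * (u ^ i.val) ^ p :=
    absorb_pow (Eid_mul_xpowEl p K hr u i) p
  rw [h1, ← pow_mul, mul_comm i.val p, pow_mul, hu, one_pow, mul_one]

end CT

namespace CT
open Polynomial

variable (p : ℕ) [Fact p.Prime] (K : Type) [Field K] [CharP K p]
variable {R S : Type} [CommRing R] [Algebra K R] [CommRing S] [Algebra K S]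

include K

lemma e_mul_Eid {e t : R} {c : ZMod p} (h : e * t = e * (c.val : R)) (m : ZMod p) :
    e * Eid p m t = if m = c then e else 0 := by
  have habs : e * (t - (m.val : R)) = e * ((c.val : R) - (m.val : R)) := by
    rw [mul_sub, mul_sub, h]
  have h1 : e * (t - (m.val : R)) ^ (p - 1) = e * ((c.val : R) - (m.val : R)) ^ (p - 1) :=
    absorb_pow habs (p - 1)
  rcases eq_or_ne m c with hmc | hmc
  · subst hmc
    rw [if_pos rfl]
    have : ((m.val : R) - (m.val : R)) ^ (p - 1) = 0 := by
      rw [sub_self, zero_pow (Nat.sub_ne_zero_of_lt (Fact.out : p.Prime).one_lt)]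
    unfold Eid
    rw [mul_sub, mul_one, h1, this, mul_zero, sub_zero]
  · rw [if_neg hmc]
    have : ((c.val : R) - (m.val : R)) ^ (p - 1) = 1 := scalar_fermat p K (Ne.symm hmc)
    unfold Eid
    rw [mul_sub, mul_one, h1, this, mul_one, sub_self]

lemma e_mul_xpowEl {e t u : R} {c : ZMod p} (h : e * t = e * (c.val : R)) :
    e * xpowEl p t u = e * u ^ c.val := by
  unfold xpowEl
  rw [Finset.mul_sum]
  rw [Finset.sum_eq_single c]
  · rw [← mul_assoc, e_mul_Eid p K h, if_pos rfl]
  · intro m _ hm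
    rw [← mul_assoc, e_mul_Eid p K h, if_neg hm, zero_mul]
  · intro hc; exact absurd (Finset.mem_univ c) hc

lemma xpowEl_cast (c : ZMod p) (u : R) : xpowEl p ((c.val : R)) u = u ^ c.val := by
  have h : (1 : R) * ((c.val : ℕ) : R) = (1 : R) * ((c.val : ℕ) : R) := rfl
  have := e_mul_xpowEl p K (u := u) h
  simpa using this

lemma one_eq_val_cast : ((1 : ZMod p).val : R) = 1 := by
  rw [ZMod.val_one_eq_one_mod, Nat.mod_eq_of_lt (Fact.out : p.Prime).one_lt, Nat.cast_one]

lemma xpowEl_one_left (u : R) : xpowEl p (1 : R) u = u := by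
  have h := xpowEl_cast p K (1 : ZMod p) u
  rw [one_eq_val_cast p K] at h
  rw [h, ZMod.val_one_eq_one_mod, Nat.mod_eq_of_lt (Fact.out : p.Prime).one_lt, pow_one]

lemma val_add_cast (i j : ZMod p) : ((i + j).val : R) = (i.val : R) + (j.val : R) := by
  rw [← Nat.cast_add]
  apply natCast_eq_of_zmod p K
  push_cast [ZMod.natCast_val, ZMod.cast_id]
  ring

lemma xpowEl_add {r s u : R} (hr : r ^ p = r) (hs : s ^ p = s) (hu : u ^ p = 1) :
    xpowEl p (r + s) u = xpowEl p r u * xpowEl p s u := by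
  apply eq_of_Eid2 p K r s
  intro i j
  have hg : (Eid p i r * Eid p j s) * (r + s)
      = (Eid p i r * Eid p j s) * (((i + j).val : R)) := by
    rw [val_add_cast p K]
    linear_combination Eid p j s * Eid_mul_r p K hr i + Eid p i r * Eid_mul_r p K hs j
  have hL : (Eid p i r * Eid p j s) * xpowEl p (r + s) u
      = (Eid p i r * Eid p j s) * u ^ (i + j).val := e_mul_xpowEl p K hg
  have hRi : Eid p i r * xpowEl p r u = Eid p i r * u ^ i.val :=
    e_mul_xpowEl p K (Eid_mul_r p K hr i)
  have hRj : Eid p j s * xpowEl p s u = Eid p j s * u ^ j.val :=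
    e_mul_xpowEl p K (Eid_mul_r p K hs j)
  have hR : (Eid p i r * Eid p j s) * (xpowEl p r u * xpowEl p s u)
      = (Eid p i r * Eid p j s) * (u ^ i.val * u ^ j.val) := by
    calc (Eid p i r * Eid p j s) * (xpowEl p r u * xpowEl p s u)
        = (Eid p i r * xpowEl p r u) * (Eid p j s * xpowEl p s u) := by ring
      _ = (Eid p i r * u ^ i.val) * (Eid p j s * u ^ j.val) := by rw [hRi, hRj]
      _ = (Eid p i r * Eid p j s) * (u ^ i.val * u ^ j.val) := by ring
  have hpow : u ^ (i + j).val = u ^ i.val * u ^ j.val := by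
    rw [← pow_add]
    apply pow_eq_pow_of_mod_eq p hu
    rw [ZMod.val_add, Nat.mod_mod_of_dvd _ dvd_rfl]
  rw [← mul_assoc, ← mul_assoc, hL, hR, hpow]

lemma xpowEl_mul_right {r u v : R} (hr : r ^ p = r) :
    xpowEl p r (u * v) = xpowEl p r u * xpowEl p r v := by
  apply eq_of_Eid p K r
  intro i
  have h1 : Eid p i r * xpowEl p r (u * v) = Eid p i r * (u * v) ^ i.val :=
    e_mul_xpowEl p K (Eid_mul_r p K hr i)
  have h2 : Eid p i r * (xpowEl p r u * xpowEl p r v)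
      = Eid p i r * (u ^ i.val * v ^ i.val) := by
    calc Eid p i r * (xpowEl p r u * xpowEl p r v)
        = (Eid p i r * xpowEl p r u) * xpowEl p r v := by ring
      _ = (Eid p i r * u ^ i.val) * xpowEl p r v := by
          rw [e_mul_xpowEl p K (Eid_mul_r p K hr i)]
      _ = u ^ i.val * (Eid p i r * xpowEl p r v) := by ring
      _ = u ^ i.val * (Eid p i r * v ^ i.val) := by
          rw [e_mul_xpowEl p K (Eid_mul_r p K hr i)]
      _ = Eid p i r * (u ^ i.val * v ^ i.val) := by ring
  rw [h1, h2, mul_pow]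

end CT




namespace CT

variable (p : ℕ) [Fact p.Prime] (K : Type) [Field K] [CharP K p]
variable {R S : Type} [CommRing R] [Algebra K R] [CommRing S] [Algebra K S]

def quotId (r : R) (i : ZMod p) : Ideal R := Ideal.span {1 - Eid p i r}

def quotMap (r : R) (i : ZMod p) : R →ₐ[K] R ⧸ quotId p r i :=
  Ideal.Quotient.mkₐ K _

include K

lemma quotMap_one_sub (r : R) (i : ZMod p) : quotMap p K r i (1 - Eid p i r) = 0 := by
  apply Ideal.Quotient.eq_zero_iff_mem.2
  exact Ideal.subset_span rfl

lemma quotMap_Eid_self {r : R} (i : ZMod p) : quotMap p K r i (Eid p i r) = 1 := by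
  have := quotMap_one_sub p K r i
  rw [map_sub, map_one, sub_eq_zero] at this
  exact this.symm

lemma quotMap_Eid_ne {r : R} (hr : r ^ p = r) {i j : ZMod p} (h : j ≠ i) :
    quotMap p K r i (Eid p j r) = 0 := by
  apply Ideal.Quotient.eq_zero_iff_mem.2
  rw [quotId, Ideal.mem_span_singleton']
  refine ⟨Eid p j r, ?_⟩
  rw [mul_sub, mul_one, Eid_mul_Eid_ne p K hr h, sub_zero]

lemma quotMap_r {r : R} (hr : r ^ p = r) (i : ZMod p) :
    quotMap p K r i r = ((i.val : ℕ) : R ⧸ quotId p r i) := by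
  have hmem : r - (i.val : R) ∈ quotId p r i := by
    rw [quotId, Ideal.mem_span_singleton']
    refine ⟨r - (i.val : R), ?_⟩
    have h0 := Eid_mul_sub p K hr i
    calc (r - (i.val : R)) * (1 - Eid p i r)
        = (r - (i.val : R)) - Eid p i r * (r - (i.val : R)) := by ring
      _ = r - (i.val : R) := by rw [h0, sub_zero]
  have : quotMap p K r i (r - (i.val : R)) = 0 := Ideal.Quotient.eq_zero_iff_mem.2 hmem
  rw [map_sub, sub_eq_zero] at this
  rw [this, map_natCast]

lemma elem_eq_of_quot {r : R} (hr : r ^ p = r) {c d : R}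
    (h : ∀ i : ZMod p, quotMap p K r i c = quotMap p K r i d) : c = d := by
  apply eq_of_Eid p K r
  intro i
  have h0 : quotMap p K r i (c - d) = 0 := by rw [map_sub, h i, sub_self]
  have hmem : c - d ∈ quotId p r i := Ideal.Quotient.eq_zero_iff_mem.1 h0
  rw [quotId, Ideal.mem_span_singleton'] at hmem
  obtain ⟨a, ha⟩ := hmem
  have : Eid p i r * (c - d) = 0 := by
    rw [← ha]
    have := Eid_idem p K hr i
    calc Eid p i r * (a * (1 - Eid p i r))
        = a * (Eid p i r - Eid p i r * Eid p i r) := by ring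
      _ = 0 := by rw [this, sub_self, mul_zero]
  linear_combination this

lemma alghom_eq_of_quot {A : Type} [CommRing A] [Algebra K A] {r : R} (hr : r ^ p = r)
    {u v : A →ₐ[K] R}
    (h : ∀ i : ZMod p, (quotMap p K r i).comp u = (quotMap p K r i).comp v) : u = v := by
  ext a
  apply elem_eq_of_quot p K hr
  intro i
  exact congrArg (fun (w : A →ₐ[K] R ⧸ quotId p r i) => w a) (h i)

/-- `x ^ r` as an element of `μ_p(R)`. -/
def xpowMu (r : R) (hr : r ^ p = r) (x : mu p R) : mu p R :=
  ⟨{ val := xpowEl p r ((x : Rˣ) : R)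
     inv := xpowEl p r ((x : Rˣ) : R) ^ (p - 1)
     val_inv := by
       rw [← pow_succ', Nat.sub_add_cancel (ppos p), xpowEl_pow_p p K hr (mu_spec' p x)]
     inv_val := by
       rw [← pow_succ, Nat.sub_add_cancel (ppos p), xpowEl_pow_p p K hr (mu_spec' p x)] },
   by
     rw [mem_mu_iff]
     apply Units.ext
     rw [Units.val_pow_eq_pow_val]
     exact xpowEl_pow_p p K hr (mu_spec' p x)⟩

lemma xpowMu_coe (r : R) (hr : r ^ p = r) (x : mu p R) :
    ((xpowMu p K r hr x : Rˣ) : R) = xpowEl p r ((x : Rˣ) : R) := rfl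

lemma xpowMu_natural (ψ : R →ₐ[K] S) {r : R} (hr : r ^ p = r) (hr' : (ψ r) ^ p = ψ r)
    (x : mu p R) :
    muMap p ψ.toRingHom (xpowMu p K r hr x) = xpowMu p K (ψ r) hr' (muMap p ψ.toRingHom x) := by
  apply Subtype.ext; apply Units.ext
  show ψ (xpowEl p r ((x : Rˣ) : R)) = xpowEl p (ψ r) (ψ ((x : Rˣ) : R))
  exact xpowEl_natural p K ψ _ _

lemma xpowMu_one (hr : (1 : R) ^ p = 1) (x : mu p R) : xpowMu p K 1 hr x = x := by
  apply Subtype.ext; apply Units.ext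
  show xpowEl p (1 : R) ((x : Rˣ) : R) = ((x : Rˣ) : R)
  exact xpowEl_one_left p K _

lemma xpowMu_cast (c : ZMod p) (hc : ((c.val : ℕ) : R) ^ p = ((c.val : ℕ) : R)) (x : mu p R) :
    xpowMu p K ((c.val : ℕ) : R) hc x = x ^ c.val := by
  apply Subtype.ext; apply Units.ext
  show xpowEl p ((c.val : ℕ) : R) ((x : Rˣ) : R) = (((x ^ c.val : mu p R) : Rˣ) : R)
  rw [mu_coe_pow, xpowEl_cast p K]

lemma xpowMu_add {r s : R} (hr : r ^ p = r) (hs : s ^ p = s) (hrs : (r + s) ^ p = r + s)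
    (x : mu p R) :
    xpowMu p K (r + s) hrs x = xpowMu p K r hr x * xpowMu p K s hs x := by
  apply Subtype.ext; apply Units.ext
  show xpowEl p (r + s) ((x : Rˣ) : R) = xpowEl p r ((x : Rˣ) : R) * xpowEl p s ((x : Rˣ) : R)
  exact xpowEl_add p K hr hs (mu_spec' p x)

lemma xpowMu_mul {r : R} (hr : r ^ p = r) (x y : mu p R) :
    xpowMu p K r hr (x * y) = xpowMu p K r hr x * xpowMu p K r hr y := by
  apply Subtype.ext; apply Units.ext
  show xpowEl p r (((x * y : mu p R) : Rˣ) : R) = _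
  have : (((x * y : mu p R) : Rˣ) : R) = ((x : Rˣ) : R) * ((y : Rˣ) : R) := by simp
  rw [this, xpowEl_mul_right p K hr]
  rfl

end CT




namespace CT

section Hgroup

variable {K : Type} [CommRing K] (H : AffAbGrp K)
variable {R : Type} [CommRing R] [Algebra K R]

lemma H_add_zero (a : H.C →ₐ[K] R) : H.add R a (H.zero R) = a := by
  rw [H.add_comm, H.zero_add]

lemma H_cancel {a b c : H.C →ₐ[K] R} (h : H.add R a b = H.add R a c) : b = c := by
  calc b = H.add R (H.zero R) b := (H.zero_add R b).symm
    _ = H.add R (H.add R (H.neg R a) a) b := by rw [H.neg_add]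
    _ = H.add R (H.neg R a) (H.add R a b) := H.add_assoc R _ _ _
    _ = H.add R (H.neg R a) (H.add R a c) := by rw [h]
    _ = H.add R (H.add R (H.neg R a) a) c := (H.add_assoc R _ _ _).symm
    _ = H.add R (H.zero R) c := by rw [H.neg_add]
    _ = c := H.zero_add R c

lemma H_self_add {a : H.C →ₐ[K] R} (h : H.add R a a = a) : a = H.zero R := by
  apply H_cancel H (a := a)
  rw [h, H_add_zero]

end Hgroup

section Tdef

variable (p : ℕ) [Fact p.Prime] (K : Type) [Field K] [CharP K p]

/-- `μ_p` as an affine abelian group scheme. -/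
def Tgrp : AffAbGrp K where
  C := MA K p
  add R _ _ f g := (Epoints p R).symm (Epoints p R f * Epoints p R g)
  zero R _ _ := (Epoints p R).symm 1
  neg R _ _ f := (Epoints p R).symm (Epoints p R f)⁻¹
  add_assoc R _ _ f g h := by
    simp only [Equiv.apply_symm_apply]
    rw [mul_assoc]
  add_comm R _ _ f g := by rw [mul_comm]
  zero_add R _ _ f := by
    simp only [Equiv.apply_symm_apply]
    rw [one_mul, Equiv.symm_apply_apply]
  neg_add R _ _ f := by
    simp only [Equiv.apply_symm_apply]
    rw [inv_mul_cancel]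
  map_add R S _ _ _ _ ψ f g := by
    rw [Epoints_symm_natural, muMap_mul, Epoints_natural, Epoints_natural]
  map_zero R S _ _ _ _ ψ := by
    rw [Epoints_symm_natural, muMap_one]

lemma Tgrp_add {R : Type} [CommRing R] [Algebra K R] (f g : (Tgrp p K).C →ₐ[K] R) :
    (Tgrp p K).add R f g = (Epoints p R).symm (Epoints p R f * Epoints p R g) := rfl

/-- the universal bilinear map `(r, x) ↦ x ^ r`. -/
def aBil : ConstMuBilin p K (Tgrp p K) where
  b R _ _ r hr x := (Epoints p R).symm (xpowMu p K r hr x)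
  left R _ _ r s hr hs hrs x := by
    erw [CT.Tgrp_add]
    simp only [Equiv.apply_symm_apply]
    rw [xpowMu_add p K hr hs hrs]
  right R _ _ r hr x y := by
    erw [CT.Tgrp_add]
    simp only [Equiv.apply_symm_apply]
    rw [xpowMu_mul p K hr]
  nat R S _ _ _ _ ψ r hr hr' x := by
    erw [Epoints_symm_natural]
    congr 1
    exact xpowMu_natural p K ψ hr hr' x

end Tdef

end CT

namespace CT

lemma affAbHom_ext {K : Type} [CommRing K] {G H : AffAbGrp K} {f g : AffAbHom G H}
    (h : ∀ (R : Type) [CommRing R] [Algebra K R] (x : G.C →ₐ[K] R), f.app R x = g.app R x) :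
    f = g := by
  cases f with
  | mk fapp fadd fnat =>
    cases g with
    | mk gapp gadd gnat =>
      have : fapp = gapp := by
        funext R iR aR x
        exact h R x
      subst this
      rfl

lemma app_yoneda {K : Type} [CommRing K] {G H : AffAbGrp K} (g : AffAbHom G H)
    (R : Type) [CommRing R] [Algebra K R] (f : G.C →ₐ[K] R) :
    g.app R f = f.comp (g.app G.C (AlgHom.id K G.C)) := by
  have := g.app_nat G.C R f (AlgHom.id K G.C)
  rw [AlgHom.comp_id] at this
  exact this.symm

section Main

variable (p : ℕ) [Fact p.Prime] (K : Type) [Field K] [CharP K p]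
variable {H : AffAbGrp K} (φ : ConstMuBilin p K H)
variable {R S : Type} [CommRing R] [Algebra K R] [CommRing S] [Algebra K S]

lemma b_congr {r r' : R} (h : r = r') {hr : r ^ p = r} {hr' : r' ^ p = r'} (x : mu p R) :
    φ.b R r hr x = φ.b R r' hr' x := by subst h; rfl

lemma xpow_congr {r r' : R} (h : r = r') {hr : r ^ p = r} {hr' : r' ^ p = r'} (x : mu p R) :
    xpowMu p K r hr x = xpowMu p K r' hr' x := by subst h; rfl

include K in
lemma natCast_pow_p (n : ℕ) : ((n : ℕ) : R) ^ p = ((n : ℕ) : R) := by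
  rw [← Nat.cast_pow]
  exact natCast_eq_of_zmod p K (by push_cast; rw [ZMod.pow_card])

lemma b_zero_left (h0 : (0 : R) ^ p = 0) (x : mu p R) : φ.b R 0 h0 x = H.zero R := by
  apply H_self_add
  have h := φ.left R 0 0 h0 h0 (by simpa using h0) x
  rw [b_congr p K φ (add_zero (0 : R)) x] at h
  exact h.symm

lemma b_one_right (r : R) (hr : r ^ p = r) : φ.b R r hr 1 = H.zero R := by
  apply H_self_add
  have h := φ.right R r hr 1 1
  rw [mul_one] at h
  exact h.symm

include K in
lemma b_natCast (n : ℕ) (hn : ((n : ℕ) : R) ^ p = ((n : ℕ) : R)) (h1 : (1 : R) ^ p = 1)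
    (x : mu p R) : φ.b R ((n : ℕ) : R) hn x = φ.b R 1 h1 (x ^ n) := by
  induction n with
  | zero =>
    rw [b_congr p K φ (Nat.cast_zero) x (hr' := by simpa using hn), pow_zero,
      b_zero_left p K φ, b_one_right p K φ]
  | succ n ih =>
    have hA : ((n + 1 : ℕ) : R) = ((n : ℕ) : R) + 1 := by push_cast; ring
    have hsum : (((n : ℕ) : R) + 1) ^ p = ((n : ℕ) : R) + 1 := by rw [← hA]; exact hn
    rw [b_congr p K φ hA x (hr' := hsum)]
    rw [φ.left R ((n : ℕ) : R) 1 (natCast_pow_p p K n) h1 hsum x]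
    rw [ih (natCast_pow_p p K n)]
    rw [← φ.right]
    rw [pow_succ]

lemma b_main (r : R) (hr : r ^ p = r) (x : mu p R) :
    φ.b R r hr x = φ.b R 1 (one_pow p) (xpowMu p K r hr x) := by
  apply alghom_eq_of_quot p K hr
  intro i
  set ψ := quotMap p K r i with hψ
  have hr2 : (ψ r) ^ p = ψ r := by rw [← map_pow, hr]
  have hψr : ψ r = ((i.val : ℕ) : R ⧸ quotId p r i) := quotMap_r p K hr i
  have hL : ψ.comp (φ.b R r hr x)
      = φ.b _ 1 (one_pow p) ((muMap p ψ.toRingHom x) ^ i.val) := by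
    rw [φ.nat R _ ψ r hr hr2 x,
      b_congr p K φ hψr (hr' := natCast_pow_p p K i.val),
      b_natCast p K φ i.val (natCast_pow_p p K i.val) (one_pow p)]
  have hR : ψ.comp (φ.b R 1 (one_pow p) (xpowMu p K r hr x))
      = φ.b _ 1 (one_pow p) ((muMap p ψ.toRingHom x) ^ i.val) := by
    rw [φ.nat R _ ψ 1 (one_pow p) (by rw [map_one, one_pow]) (xpowMu p K r hr x),
      b_congr p K φ (map_one ψ) (hr' := one_pow p)]
    congr 1
    rw [xpowMu_natural p K ψ hr hr2 x,
      xpow_congr p K hψr (hr' := natCast_pow_p p K i.val),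
      xpowMu_cast p K i (natCast_pow_p p K i.val)]
  rw [hL, hR]

end Main
end CT

namespace CT

section Final

variable (p : ℕ) [Fact p.Prime] (K : Type) [Field K] [CharP K p]

lemma aBil_b {R : Type} [CommRing R] [Algebra K R] (r : R) (hr : r ^ p = r) (x : mu p R) :
    (aBil p K).b R r hr x = (Epoints p R).symm (xpowMu p K r hr x) := rfl

lemma aBil_b_one {R : Type} [CommRing R] [Algebra K R] (x : mu p R) :
    (aBil p K).b R 1 (one_pow p) x = (Epoints p R).symm x := by
  rw [aBil_b, xpowMu_one]

/-- the homomorphism induced by a bilinear map. -/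
def Fhom (H : AffAbGrp K) (φ : ConstMuBilin p K H) : AffAbHom (Tgrp p K) H where
  app R _ _ f := φ.b R 1 (one_pow p) (Epoints p R f)
  app_add R _ _ f g := by
    beta_reduce
    rw [CT.Tgrp_add]
    rw [show Epoints p R ((Epoints p R).symm (Epoints p R f * Epoints p R g))
        = Epoints p R f * Epoints p R g from Equiv.apply_symm_apply _ _]
    rw [φ.right]
  app_nat R S _ _ _ _ ψ f := by
    rw [φ.nat R S ψ 1 (one_pow p) (by rw [map_one, one_pow]) (Epoints p R f),
      b_congr p K φ (map_one ψ) (hr' := one_pow p)]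
    erw [Epoints_natural]
    rfl

lemma Fhom_spec (H : AffAbGrp K) (φ : ConstMuBilin p K H) {R : Type} [CommRing R]
    [Algebra K R] (r : R) (hr : r ^ p = r) (x : mu p R) :
    (Fhom p K H φ).app R ((aBil p K).b R r hr x) = φ.b R r hr x := by
  show φ.b R 1 (one_pow p) (Epoints p R ((Epoints p R).symm (xpowMu p K r hr x))) = _
  rw [Equiv.apply_symm_apply]
  exact (b_main p K φ r hr x).symm

end Final
end CT



end

/-- Over an algebraically closed field `k` of characteristic `p > 0`,
the tensor product of the constant group scheme `ℤ/pℤ` with `μ_p` is isomorphic to `μ_p`: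
there is an affine abelian group scheme `T` together with a universal bilinear natural
transformation `ℤ/pℤ × μ_p → T`, whose functor of points is naturally isomorphic (as
group-valued functors) to `μ_p`. -/
theorem const_zp_tensor_mup (p : ℕ) [Fact p.Prime] (k : Type) [Field k] [IsAlgClosed k]
    [CharP k p] :
    ∃ (T : AffAbGrp k) (a : ConstMuBilin p k T),
      (∀ (H : AffAbGrp k) (φ : ConstMuBilin p k H),
        ∃! f : AffAbHom T H, ∀ (R : Type) [CommRing R] [Algebra k R]
          (r : R) (hr : r ^ p = r) (x : mu p R),
          f.app R (a.b R r hr x) = φ.b R r hr x) ∧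
      ∃ e : ∀ (R : Type) [CommRing R] [Algebra k R], (T.C →ₐ[k] R) ≃ mu p R,
        (∀ (R : Type) [CommRing R] [Algebra k R] (f g : T.C →ₐ[k] R),
          e R (T.add R f g) = e R f * e R g) ∧
        (∀ (R S : Type) [CommRing R] [Algebra k R] [CommRing S] [Algebra k S]
          (ψ : R →ₐ[k] S) (f : T.C →ₐ[k] R),
          muMap p ψ.toRingHom (e R f) = e S (ψ.comp f)) := by
  refine ⟨CT.Tgrp p k, CT.aBil p k, ?_, ?_⟩
  · intro H φ
    refine ⟨CT.Fhom p k H φ, ?_, ?_⟩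
    · intro R _ _ r hr x
      exact CT.Fhom_spec p k H φ r hr x
    · intro f' hf'
      apply CT.affAbHom_ext
      intro R _ _ f
      rw [CT.app_yoneda f' R f, CT.app_yoneda (CT.Fhom p k H φ) R f]
      congr 1
      have hid : AlgHom.id k ((CT.Tgrp p k).C)
          = (CT.aBil p k).b ((CT.Tgrp p k).C) 1 (one_pow p)
              (CT.Epoints p ((CT.Tgrp p k).C) (AlgHom.id k ((CT.Tgrp p k).C))) := by
        rw [CT.aBil_b_one]; erw [Equiv.symm_apply_apply]
      calc f'.app ((CT.Tgrp p k).C) (AlgHom.id k ((CT.Tgrp p k).C))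
          = f'.app ((CT.Tgrp p k).C) ((CT.aBil p k).b ((CT.Tgrp p k).C) 1 (one_pow p)
              (CT.Epoints p ((CT.Tgrp p k).C) (AlgHom.id k ((CT.Tgrp p k).C)))) := by rw [← hid]
        _ = φ.b ((CT.Tgrp p k).C) 1 (one_pow p)
              (CT.Epoints p ((CT.Tgrp p k).C) (AlgHom.id k ((CT.Tgrp p k).C))) :=
            hf' ((CT.Tgrp p k).C) 1 (one_pow p) _
        _ = (CT.Fhom p k H φ).app ((CT.Tgrp p k).C) (AlgHom.id k ((CT.Tgrp p k).C)) := rfl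
  · refine ⟨fun R _ _ => CT.Epoints p R, ?_, ?_⟩
    · intro R _ _ f g
      beta_reduce
      rw [CT.Tgrp_add]
      exact (CT.Epoints p R).apply_symm_apply _
    · intro R S _ _ _ _ ψ f
      exact CT.Epoints_natural p ψ f
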